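/- arXiv:1406.5433 — 7 statements merged into one kernel-verified Lean document; each statement's English description precedes it below -/
import Mathlib

section
/- Let P be a multivariate polynomial in p variables with coefficients in 𝕂, say P = Σ_{α∈S} c_α X_1^{α_1}⋯X_p^{α_p} with finite support S ⊆ ℕ^p and c_α ≠ 0 for all α ∈ S. Let x ∈ 𝕂^p, and for α ∈ S set m(α) := val(c_α) + Σ_{i=1}^p α_i·val(x_i) ∈ ℝ∪{−∞} (with the conventions val(0) = −∞, (−∞)+r = −∞ and 0·(−∞) = 0). Suppose that max_{α∈S} m(α) is not −∞ and is attained at exactly one element α* ∈ S. Then P(x) ≠ 0, val(P(x)) = m(α*), and the leading coefficient of P(x) equals lc(c_{α*})·∏_{i=1}^p lc(x_i)^{α*_i}; in particular the sign of P(x) equals the sign of lc(c_{α*})·∏_{i=1}^p lc(x_i)^{α*_i}. -/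
/-- The field of generalized real Puiseux series: Hahn series over `ℝ`
whose exponent group is `ℝ` with the reversed order (so supports have a
largest real exponent). -/
abbrev PSeries : Type := HahnSeries ℝᵒᵈ ℝ

open Classical in
/-- The valuation of a generalized Puiseux series: its largest exponent,
with `val 0 = ⊥ = -∞`. -/
noncomputable def pval (x : PSeries) : WithBot ℝ :=
  if x = 0 then ⊥ else ((OrderDual.ofDual x.order : ℝ) : WithBot ℝ)

/-- The leading coefficient of a generalized Puiseux series: the coefficient
of `t ^ val x`. -/
noncomputable def plc (x : PSeries) : ℝ := x.coeff x.order

namespace Stmt0Aux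

noncomputable def tb : WithBot ℝ → WithTop ℝᵒᵈ :=
  fun v => WithBot.recBotCoe ⊤ (fun r => ((OrderDual.toDual r : ℝᵒᵈ) : WithTop ℝᵒᵈ)) v

@[simp] lemma tb_zero : tb 0 = 0 := rfl

lemma tb_add (a b : WithBot ℝ) : tb (a + b) = tb a + tb b := by
  induction a using WithBot.recBotCoe with
  | bot => simp [tb]
  | coe a =>
    induction b using WithBot.recBotCoe with
    | bot => simp [tb]
    | coe b => rfl

lemma tb_nsmul (n : ℕ) (a : WithBot ℝ) : tb (n • a) = n • tb a := by
  induction n with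
  | zero => simp
  | succ n ih => rw [succ_nsmul, succ_nsmul, tb_add, ih]

lemma tb_sum {ι : Type*} (s : Finset ι) (f : ι → WithBot ℝ) :
    tb (∑ i ∈ s, f i) = ∑ i ∈ s, tb (f i) := by
  classical
  induction s using Finset.induction_on with
  | empty => simp
  | @insert a s hni ih => rw [Finset.sum_insert hni, Finset.sum_insert hni, tb_add, ih]

@[simp] lemma tb_bot : tb ⊥ = ⊤ := rfl
@[simp] lemma tb_coe (r : ℝ) : tb (r : WithBot ℝ) = ((OrderDual.toDual r : ℝᵒᵈ) : WithTop ℝᵒᵈ) := rfl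

lemma tb_inj : Function.Injective tb := by
  intro a b h
  induction a using WithBot.recBotCoe <;> induction b using WithBot.recBotCoe <;>
    simp_all [tb]

lemma tb_lt_tb {a b : WithBot ℝ} (h : a < b) : tb b < tb a := by
  induction a using WithBot.recBotCoe with
  | bot =>
    induction b using WithBot.recBotCoe with
    | bot => exact absurd h (lt_irrefl _)
    | coe b => simp
  | coe a =>
    induction b using WithBot.recBotCoe with
    | bot => exact absurd h (by simp)
    | coe b =>
      rw [WithBot.coe_lt_coe] at h
      simpa [WithTop.coe_lt_coe] using h

lemma tb_pval (x : PSeries) : tb (pval x) = x.orderTop := by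
  by_cases hx : x = 0
  · simp [hx, pval]
  · rw [pval, if_neg hx, tb_coe, HahnSeries.orderTop_of_ne_zero hx, HahnSeries.order_of_ne hx]
    rfl

lemma pval_ne_bot_iff {x : PSeries} : pval x ≠ ⊥ ↔ x ≠ 0 := by
  simp only [pval]; split <;> simp_all

lemma orderTop_mul' (x y : PSeries) : (x * y).orderTop = x.orderTop + y.orderTop := by
  by_cases hx : x = 0
  · simp [hx]
  by_cases hy : y = 0
  · simp [hy]
  have hxy : x * y ≠ 0 := mul_ne_zero hx hy
  rw [← HahnSeries.order_eq_orderTop_of_ne_zero hx, ← HahnSeries.order_eq_orderTop_of_ne_zero hy,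
    ← HahnSeries.order_eq_orderTop_of_ne_zero hxy, HahnSeries.order_mul hx hy, WithTop.coe_add]

lemma orderTop_pow' (x : PSeries) (n : ℕ) : (x ^ n).orderTop = n • x.orderTop := by
  induction n with
  | zero => simp [HahnSeries.orderTop_one]
  | succ n ih => rw [pow_succ, orderTop_mul', ih, succ_nsmul]

lemma leadingCoeff_mul' (x y : PSeries) :
    (x * y).leadingCoeff = x.leadingCoeff * y.leadingCoeff := by
  by_cases hx : x = 0
  · simp [hx]
  by_cases hy : y = 0
  · simp [hy]
  rw [HahnSeries.leadingCoeff_eq, HahnSeries.order_mul hx hy,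
    HahnSeries.coeff_mul_order_add_order]

lemma leadingCoeff_pow' (x : PSeries) (n : ℕ) :
    (x ^ n).leadingCoeff = x.leadingCoeff ^ n := by
  induction n with
  | zero => simp [HahnSeries.leadingCoeff_one]
  | succ n ih => rw [pow_succ, leadingCoeff_mul', ih, pow_succ]

lemma plc_eq (x : PSeries) : plc x = x.leadingCoeff := (HahnSeries.leadingCoeff_eq).symm

lemma lt_orderTop_sum {ι : Type*} (s : Finset ι) (f : ι → PSeries) (T : WithTop ℝᵒᵈ)
    (hT : T ≠ ⊤) (h : ∀ a ∈ s, T < (f a).orderTop) : T < (∑ a ∈ s, f a).orderTop := by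
  classical
  induction s using Finset.induction_on with
  | empty =>
    rw [Finset.sum_empty, HahnSeries.orderTop_zero]
    exact lt_of_le_of_ne le_top hT
  | @insert a s hni ih =>
    rw [Finset.sum_insert hni]
    calc T < min (f a).orderTop (∑ b ∈ s, f b).orderTop := by
          exact lt_min (h a (Finset.mem_insert_self a s))
            (ih fun b hb => h b (Finset.mem_insert_of_mem hb))
      _ ≤ _ := HahnSeries.min_orderTop_le_orderTop_add

lemma tb_eq_top {a : WithBot ℝ} : tb a = ⊤ ↔ a = ⊥ := by
  induction a using WithBot.recBotCoe with
  | bot => simp [tb]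
  | coe a => simp [tb]

lemma orderTop_prod {ι : Type*} (s : Finset ι) (f : ι → PSeries) :
    (∏ i ∈ s, f i).orderTop = ∑ i ∈ s, (f i).orderTop := by
  classical
  induction s using Finset.induction_on with
  | empty => simp [HahnSeries.orderTop_one]
  | @insert a s hni ih =>
    rw [Finset.prod_insert hni, Finset.sum_insert hni, orderTop_mul', ih]

lemma leadingCoeff_prod {ι : Type*} (s : Finset ι) (f : ι → PSeries) :
    (∏ i ∈ s, f i).leadingCoeff = ∏ i ∈ s, (f i).leadingCoeff := by
  classical
  induction s using Finset.induction_on with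
  | empty => simp [HahnSeries.leadingCoeff_one]
  | @insert a s hni ih =>
    rw [Finset.prod_insert hni, Finset.prod_insert hni, leadingCoeff_mul', ih]

end Stmt0Aux

open Stmt0Aux in
/-- if the tropical evaluation `m(α) = val(c_α) + ∑ i, α i • val (x i)`
over the support of a multivariate polynomial `P` attains its maximum, which is not `-∞`,
at a unique exponent `α*`, then `P x ≠ 0`, `val (P x) = m α*`, the leading coefficient of
`P x` is `lc (c_{α*}) * ∏ i, lc (x i) ^ α* i`, and in particular the signs agree. -/
theorem stmt0 {p : ℕ} (P : MvPolynomial (Fin p) PSeries) (x : Fin p → PSeries)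
    (αstar : Fin p →₀ ℕ) (hmem : αstar ∈ P.support)
    (hne : pval (P.coeff αstar) + ∑ i, (αstar i) • pval (x i) ≠ ⊥)
    (hmax : ∀ α ∈ P.support, α ≠ αstar →
      pval (P.coeff α) + ∑ i, (α i) • pval (x i) <
        pval (P.coeff αstar) + ∑ i, (αstar i) • pval (x i)) :
    MvPolynomial.eval x P ≠ 0 ∧
    pval (MvPolynomial.eval x P)
      = pval (P.coeff αstar) + ∑ i, (αstar i) • pval (x i) ∧
    plc (MvPolynomial.eval x P) = plc (P.coeff αstar) * ∏ i, plc (x i) ^ (αstar i) ∧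
    Real.sign (plc (MvPolynomial.eval x P))
      = Real.sign (plc (P.coeff αstar) * ∏ i, plc (x i) ^ (αstar i)) := by
  classical
  set term : (Fin p →₀ ℕ) → PSeries := fun α => P.coeff α * ∏ i, x i ^ α i with hterm
  have key : ∀ α : Fin p →₀ ℕ,
      (term α).orderTop = tb (pval (P.coeff α) + ∑ i, (α i) • pval (x i)) := by
    intro α
    rw [tb_add, tb_sum, hterm, orderTop_mul', orderTop_prod, tb_pval]
    congr 1
    refine Finset.sum_congr rfl fun i _ => ?_
    rw [orderTop_pow', tb_nsmul, tb_pval]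
  have hTne : (term αstar).orderTop ≠ ⊤ := by
    rw [key]; exact fun h => hne (tb_eq_top.mp h)
  have hstar_ne : term αstar ≠ 0 := HahnSeries.orderTop_ne_top.mp hTne
  have heval : MvPolynomial.eval x P
      = term αstar + ∑ α ∈ P.support.erase αstar, term α := by
    rw [MvPolynomial.eval_eq' x P, ← Finset.add_sum_erase _ term hmem]
  have hR : (term αstar).orderTop < (∑ α ∈ P.support.erase αstar, term α).orderTop := by
    refine lt_orderTop_sum _ _ _ hTne fun α hα => ?_
    rw [key, key]
    exact tb_lt_tb (hmax α (Finset.mem_of_mem_erase hα) (Finset.ne_of_mem_erase hα))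
  have hOT : (MvPolynomial.eval x P).orderTop = (term αstar).orderTop := by
    rw [heval]; exact HahnSeries.orderTop_add_eq_left hR
  have hne0 : MvPolynomial.eval x P ≠ 0 :=
    HahnSeries.orderTop_ne_top.mp (by rw [hOT]; exact hTne)
  have hpv : pval (MvPolynomial.eval x P)
      = pval (P.coeff αstar) + ∑ i, (αstar i) • pval (x i) := by
    apply tb_inj
    rw [tb_pval, hOT, key]
  have hlc : plc (MvPolynomial.eval x P) = plc (P.coeff αstar) * ∏ i, plc (x i) ^ (αstar i) := by
    rw [plc_eq, heval, HahnSeries.leadingCoeff_add_eq_left hR, hterm]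
    simp only [leadingCoeff_mul', leadingCoeff_prod, leadingCoeff_pow', plc_eq]
  exact ⟨hne0, hpv, hlc, by rw [hlc]⟩
end

section
/- Let 𝐌 be an n×n matrix with entries in 𝕂, and set v_{ij} := val(𝐌_{ij}) ∈ ℝ∪{−∞}. Suppose that the maximum over all permutations σ of {1,…,n} of Σ_{i=1}^n v_{i σ(i)} is not −∞ and is attained at exactly one permutation σ*. Then det 𝐌 ≠ 0, val(det 𝐌) = Σ_{i=1}^n v_{i σ*(i)}, and the leading coefficient of det 𝐌 equals sgn(σ*)·∏_{i=1}^n lc(𝐌_{i σ*(i)}). -/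
lemma pval_zero : pval 0 = ⊥ := by simp [pval]

lemma pval_of_ne {x : PSeries} (hx : x ≠ 0) :
    pval x = ((OrderDual.ofDual x.order : ℝ) : WithBot ℝ) := by simp [pval, hx]

lemma pval_ne_bot_iff {x : PSeries} : pval x ≠ ⊥ ↔ x ≠ 0 := by
  constructor
  · intro h hx; exact h (by simp [pval, hx])
  · intro hx; rw [pval_of_ne hx]; exact WithBot.coe_ne_bot

lemma plc_eq_leadingCoeff (x : PSeries) : plc x = x.leadingCoeff :=
  HahnSeries.leadingCoeff_eq.symm

lemma plc_ne_zero {x : PSeries} (hx : x ≠ 0) : plc x ≠ 0 :=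
  fun h => hx (HahnSeries.coeff_order_eq_zero.mp h)

lemma pval_mul (x y : PSeries) : pval (x * y) = pval x + pval y := by
  by_cases hx : x = 0
  · simp [hx, pval_zero]
  by_cases hy : y = 0
  · simp [hy, pval_zero]
  have hxy : x * y ≠ 0 := mul_ne_zero hx hy
  rw [pval_of_ne hx, pval_of_ne hy, pval_of_ne hxy,
    HahnSeries.order_mul hx hy, ← WithBot.coe_add]
  rfl

lemma plc_mul (x y : PSeries) : plc (x * y) = plc x * plc y := by
  by_cases hx : x = 0
  · simp [hx, plc]
  by_cases hy : y = 0
  · simp [hy, plc]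
  rw [plc_eq_leadingCoeff, plc_eq_leadingCoeff, plc_eq_leadingCoeff]
  rw [HahnSeries.leadingCoeff_eq, HahnSeries.order_mul hx hy,
    HahnSeries.coeff_mul_order_add_order]

lemma plc_one : plc (1 : PSeries) = 1 := by
  rw [plc_eq_leadingCoeff, HahnSeries.leadingCoeff_one]

lemma pval_one : pval (1 : PSeries) = 0 := by
  rw [pval_of_ne one_ne_zero, HahnSeries.order_one]; rfl

lemma pval_prod {ι : Type*} (s : Finset ι) (f : ι → PSeries) :
    pval (∏ i ∈ s, f i) = ∑ i ∈ s, pval (f i) := by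
  induction s using Finset.cons_induction with
  | empty => simp [pval_one]
  | cons a s ha ih => rw [Finset.prod_cons, Finset.sum_cons, pval_mul, ih]

lemma plc_prod {ι : Type*} (s : Finset ι) (f : ι → PSeries) :
    plc (∏ i ∈ s, f i) = ∏ i ∈ s, plc (f i) := by
  induction s using Finset.cons_induction with
  | empty => simp [plc_one]
  | cons a s ha ih => rw [Finset.prod_cons, Finset.prod_cons, plc_mul, ih]

lemma pval_neg (x : PSeries) : pval (-x) = pval x := by
  by_cases hx : x = 0
  · simp [hx]
  · rw [pval_of_ne hx, pval_of_ne (neg_ne_zero.mpr hx), HahnSeries.order_neg]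

lemma plc_neg (x : PSeries) : plc (-x) = - plc x := by
  simp [plc, HahnSeries.order_neg]

lemma plc_C (c : ℝ) : plc (HahnSeries.C c : PSeries) = c := by
  rw [plc_eq_leadingCoeff]
  exact HahnSeries.leadingCoeff_of_single

lemma pval_C_mul {c : ℝ} (hc : c ≠ 0) (x : PSeries) :
    pval (HahnSeries.C c * x) = pval x := by
  have hC : (HahnSeries.C c : PSeries) ≠ 0 := HahnSeries.single_ne_zero hc
  have ho : (HahnSeries.C c : PSeries).order = (0 : ℝᵒᵈ) := HahnSeries.order_single hc
  rw [pval_mul, pval_of_ne hC, ho]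
  show ((0 : ℝ) : WithBot ℝ) + pval x = pval x
  rw [show ((0 : ℝ) : WithBot ℝ) = (0 : WithBot ℝ) from rfl, zero_add]

lemma plc_C_mul (c : ℝ) (x : PSeries) :
    plc (HahnSeries.C c * x) = c * plc x := by
  rw [plc_mul, plc_C]

lemma sum_coeff {ι : Type*} (s : Finset ι) (f : ι → PSeries) (g : ℝᵒᵈ) :
    (∑ i ∈ s, f i).coeff g = ∑ i ∈ s, (f i).coeff g := by
  induction s using Finset.cons_induction with
  | empty => simp
  | cons a s ha ih => rw [Finset.sum_cons, Finset.sum_cons, HahnSeries.coeff_add, ih]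

lemma coeff_eq_zero_of_pval_lt {x : PSeries} {g : ℝ}
    (h : pval x < (g : WithBot ℝ)) : x.coeff (OrderDual.toDual g) = 0 := by
  by_cases hx : x = 0
  · simp [hx]
  by_contra hc
  have h1 := HahnSeries.order_le_of_coeff_ne_zero hc
  have h2 : g ≤ (OrderDual.ofDual x.order : ℝ) := h1
  rw [pval_of_ne hx] at h
  exact absurd (WithBot.coe_le_coe.mpr h2) (not_le_of_gt h)

/-- if the assignment maximum `max_σ ∑ i, val (M i (σ i))` over the
permutations of `{1,…,n}` is not `-∞` and is attained at a unique permutation `σ*`,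
then `det M ≠ 0`, `val (det M) = ∑ i, val (M i (σ* i))`, and the leading coefficient
of `det M` is `sgn(σ*) * ∏ i, lc (M i (σ* i))`. -/
theorem stmt1 {n : ℕ} (M : Matrix (Fin n) (Fin n) PSeries) (σstar : Equiv.Perm (Fin n))
    (hne : (∑ i, pval (M i (σstar i))) ≠ ⊥)
    (hmax : ∀ σ : Equiv.Perm (Fin n), σ ≠ σstar →
      ∑ i, pval (M i (σ i)) < ∑ i, pval (M i (σstar i))) :
    M.det ≠ 0 ∧
    pval M.det = ∑ i, pval (M i (σstar i)) ∧
    plc M.det = ((Equiv.Perm.sign σstar : ℤ) : ℝ) * ∏ i, plc (M i (σstar i)) := by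
  classical
  -- the determinant formula in the convenient orientation
  set T : Equiv.Perm (Fin n) → PSeries :=
    fun σ => ((Equiv.Perm.sign σ : ℤ) : PSeries) * ∏ i, M i (σ i) with hT
  have hdet : M.det = ∑ σ : Equiv.Perm (Fin n), T σ := by
    rw [← Matrix.det_transpose, Matrix.det_apply']
    exact Finset.sum_congr rfl fun σ _ => by
      simp [hT, Matrix.transpose_apply]
  -- valuation and leading coefficient of each term
  have hcast : ∀ σ : Equiv.Perm (Fin n),
      ((Equiv.Perm.sign σ : ℤ) : PSeries) = HahnSeries.C (((Equiv.Perm.sign σ : ℤ) : ℝ)) := by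
    intro σ
    rw [map_intCast (HahnSeries.C : ℝ →+* PSeries)]
  have hsign_ne : ∀ σ : Equiv.Perm (Fin n), ((Equiv.Perm.sign σ : ℤ) : ℝ) ≠ 0 := by
    intro σ
    rcases Int.units_eq_one_or (Equiv.Perm.sign σ) with h | h <;> simp [h]
  have hpvalT : ∀ σ : Equiv.Perm (Fin n), pval (T σ) = ∑ i, pval (M i (σ i)) := by
    intro σ
    rw [hT]
    simp only
    rw [hcast σ, pval_C_mul (hsign_ne σ), pval_prod]
  have hplcT : ∀ σ : Equiv.Perm (Fin n),
      plc (T σ) = ((Equiv.Perm.sign σ : ℤ) : ℝ) * ∏ i, plc (M i (σ i)) := by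
    intro σ
    rw [hT]
    simp only
    rw [hcast σ, plc_C_mul, plc_prod]
  -- the maximal value as a real number
  obtain ⟨a, ha⟩ := WithBot.ne_bot_iff_exists.mp hne
  have hTstar_pval : pval (T σstar) = (a : WithBot ℝ) := by rw [hpvalT, ha]
  have hTstar_ne : T σstar ≠ 0 :=
    pval_ne_bot_iff.mp (by rw [hTstar_pval]; exact WithBot.coe_ne_bot)
  have hTstar_order : (T σstar).order = OrderDual.toDual a := by
    have := pval_of_ne hTstar_ne
    rw [hTstar_pval] at this
    have h2 : (OrderDual.ofDual (T σstar).order : ℝ) = a :=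
      WithBot.coe_injective this.symm
    exact congrArg OrderDual.toDual h2.symm ▸ rfl
  -- coefficient of det at the maximal exponent
  have hcoeff : M.det.coeff (OrderDual.toDual a) = plc (T σstar) := by
    rw [hdet, sum_coeff]
    rw [Finset.sum_eq_single σstar]
    · rw [plc, hTstar_order]
    · intro σ _ hσ
      apply coeff_eq_zero_of_pval_lt
      rw [hpvalT, ha]
      exact hmax σ hσ
    · intro h; exact absurd (Finset.mem_univ σstar) h
  have hplc_ne : plc (T σstar) ≠ 0 := plc_ne_zero hTstar_ne
  have hcoeff_ne : M.det.coeff (OrderDual.toDual a) ≠ 0 := by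
    rw [hcoeff]; exact hplc_ne
  have hdet_ne : M.det ≠ 0 := HahnSeries.ne_zero_of_coeff_ne_zero hcoeff_ne
  -- the order of det is exactly toDual a
  have horder_le : M.det.order ≤ OrderDual.toDual a :=
    HahnSeries.order_le_of_coeff_ne_zero hcoeff_ne
  have horder_ge : OrderDual.toDual a ≤ M.det.order := by
    by_contra hcon
    push_neg at hcon
    obtain ⟨b, hb⟩ : ∃ b : ℝ, OrderDual.toDual b = M.det.order :=
      ⟨OrderDual.ofDual M.det.order, rfl⟩
    have hgt : a < b := by
      rw [← hb] at hcon
      exact hcon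
    have hzero : M.det.coeff (OrderDual.toDual b) = 0 := by
      rw [hdet, sum_coeff]
      apply Finset.sum_eq_zero
      intro σ _
      apply coeff_eq_zero_of_pval_lt
      rw [hpvalT]
      by_cases hσ : σ = σstar
      · rw [hσ, ← ha]
        exact WithBot.coe_lt_coe.mpr hgt
      · exact (hmax σ hσ).trans (by rw [← ha]; exact WithBot.coe_lt_coe.mpr hgt)
    rw [hb] at hzero
    exact hdet_ne (HahnSeries.coeff_order_eq_zero.mp hzero)
  have horder : M.det.order = OrderDual.toDual a := le_antisymm horder_le horder_ge
  refine ⟨hdet_ne, ?_, ?_⟩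
  · rw [pval_of_ne hdet_ne, horder]
    exact ha
  · rw [plc, horder, hcoeff, hplcT]
end

section
/- Let F be a field, A an m×n matrix over F, I ⊆ {1,…,m} and J ⊆ {1,…,n} with |I| + |J| = n, and let J̄ := {1,…,n}∖J (so |J̄| = |I|). Let u ∈ F^n, and let y be a vector indexed by I ⊎ J satisfying: for every j ∈ J, y_j + Σ_{i∈I} A_{ij} y_i = u_j, and for every j ∈ J̄, Σ_{i∈I} A_{ij} y_i = u_j. Then for every j ∈ J there exists a sign s ∈ {+1, −1}, depending only on j, I and J, such that y_j · det(A_{I×J̄}) = s · det(M_j), where M_j is the (|I|+1)×(|I|+1) matrix whose first |I| rows are the rows of A indexed by I restricted to the columns in J̄∪{j} (taken in increasing order of index), and whose last row is (u_l)_{l∈J̄∪{j}}. -/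
open Finset Matrix

private def NN {F : Type*} [Field F] {k : ℕ} (B : Matrix (Fin k) (Fin (k+1)) F)
    (v : Fin (k+1) → F) : Matrix (Fin (k+1)) (Fin (k+1)) F :=
  Matrix.of fun a b => if h : (a : ℕ) < k then B ⟨(a : ℕ), h⟩ b else v b

private lemma NN_eq {F : Type*} [Field F] {k : ℕ} (B : Matrix (Fin k) (Fin (k+1)) F)
    (v : Fin (k+1) → F) : NN B v = (NN B 0).updateRow (Fin.last k) v := by
  ext a b
  rcases eq_or_ne a (Fin.last k) with rfl | h
  · simp [NN, Matrix.updateRow_apply]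
  · have ha : (a : ℕ) < k := by
      have := a.isLt
      have : (a : ℕ) ≠ k := fun hc => h (Fin.ext hc)
      omega
    simp [NN, Matrix.updateRow_apply, h, ha]

private lemma det_NN_add {F : Type*} [Field F] {k : ℕ} (B : Matrix (Fin k) (Fin (k+1)) F)
    (v w : Fin (k+1) → F) : (NN B (v + w)).det = (NN B v).det + (NN B w).det := by
  rw [NN_eq, NN_eq B v, NN_eq B w, Matrix.det_updateRow_add]

private lemma det_NN_smul {F : Type*} [Field F] {k : ℕ} (B : Matrix (Fin k) (Fin (k+1)) F)
    (c : F) (v : Fin (k+1) → F) : (NN B (c • v)).det = c * (NN B v).det := by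
  rw [NN_eq, NN_eq B v, Matrix.det_updateRow_smul]

private lemma det_NN_row {F : Type*} [Field F] {k : ℕ} (B : Matrix (Fin k) (Fin (k+1)) F)
    (a : Fin k) : (NN B (B a)).det = 0 := by
  apply Matrix.det_zero_of_row_eq (i := a.castSucc) (j := Fin.last k)
  · exact (Fin.castSucc_lt_last a).ne
  · funext b
    simp [NN, a.isLt]

private lemma det_NN_sum {F : Type*} [Field F] {k : ℕ} (B : Matrix (Fin k) (Fin (k+1)) F)
    (z : Fin k → F) : (NN B (fun b => ∑ a, B a b * z a)).det = 0 := by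
  have h : ∀ (s : Finset (Fin k)),
      (NN B (fun b => ∑ a ∈ s, B a b * z a)).det = 0 := by
    intro s
    induction s using Finset.induction with
    | empty =>
        apply Matrix.det_eq_zero_of_row_eq_zero (Fin.last k)
        intro b; simp [NN]
    | insert x s' hx ih =>
        have : (fun b => ∑ a ∈ insert x s', B a b * z a)
            = (fun b => B x b * z x) + fun b => ∑ a ∈ s', B a b * z a := by
          funext b; simp [Finset.sum_insert hx]
        rw [this, det_NN_add]
        have : (fun b => B x b * z x) = z x • B x := by
          funext b; simp [mul_comm]
        rw [this, det_NN_smul, det_NN_row, ih, mul_zero, add_zero]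
  exact h univ

private lemma det_NN_single {F : Type*} [Field F] {k : ℕ} (B : Matrix (Fin k) (Fin (k+1)) F)
    (p : Fin (k+1)) :
    (NN B (Pi.single p 1)).det = (-1) ^ (k + (p : ℕ)) * (B.submatrix id p.succAbove).det := by
  rw [Matrix.det_succ_row (NN B (Pi.single p 1)) (Fin.last k)]
  rw [Finset.sum_eq_single p]
  · have h1 : (NN B (Pi.single p 1)) (Fin.last k) p = 1 := by simp [NN]
    have h2 : ((NN B (Pi.single p 1)).submatrix (Fin.last k).succAbove p.succAbove)
        = B.submatrix id p.succAbove := by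
      ext a b
      simp [NN, Fin.succAbove_last, a.isLt, Matrix.submatrix]
    rw [h1, h2, Fin.val_last, mul_one]
  · intro b _ hb
    have : (NN B (Pi.single p 1)) (Fin.last k) b = 0 := by
      simp [NN, Pi.single_eq_of_ne hb]
    rw [this, mul_zero, zero_mul]
  · intro h; exact absurd (Finset.mem_univ p) h

private lemma det_NN_main {F : Type*} [Field F] {k : ℕ} (B : Matrix (Fin k) (Fin (k+1)) F)
    (z : Fin k → F) (c : F) (p : Fin (k+1)) :
    (NN B (fun b => (if b = p then c else 0) + ∑ a, B a b * z a)).det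
      = (-1) ^ (k + (p : ℕ)) * c * (B.submatrix id p.succAbove).det := by
  have : (fun b => (if b = p then c else 0) + ∑ a, B a b * z a)
      = (fun b => (if b = p then c else 0)) + fun b => ∑ a, B a b * z a := rfl
  rw [this, det_NN_add, det_NN_sum, add_zero]
  have : (fun b => if b = p then c else 0) = c • (Pi.single p 1 : Fin (k+1) → F) := by
    funext b
    rcases eq_or_ne b p with rfl | hb <;> simp [Pi.single_eq_of_ne, *]
  rw [this, det_NN_smul, det_NN_single]
  ring

/-- let `A` be an `m × n` matrix over a field, `I ⊆ [m]`, `J ⊆ [n]` with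
`|I| + |J| = n`, and `J̄ = [n] ∖ J`. If `y` (indexed by `I ⊎ J`) satisfies
`y_j + ∑_{i ∈ I} A_{ij} y_i = u_j` for `j ∈ J` and `∑_{i ∈ I} A_{ij} y_i = u_j` for
`j ∈ J̄`, then for every `j ∈ J` there is a sign `s ∈ {1, -1}` with
`y_j * det (A_{I × J̄}) = s * det M_j`, where the first `|I|` rows of `M_j` are the rows
of `A` indexed by `I` restricted to the columns of `J̄ ∪ {j}` (in increasing order), and
its last row is `(u_l)_{l ∈ J̄ ∪ {j}}`. -/
theorem stmt4 {F : Type*} [Field F] {m n : ℕ} (A : Matrix (Fin m) (Fin n) F)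
    (I : Finset (Fin m)) (J : Finset (Fin n)) (hIJ : I.card + J.card = n)
    (u : Fin n → F) (y : Fin m ⊕ Fin n → F)
    (hy1 : ∀ j ∈ J, y (Sum.inr j) + ∑ i ∈ I, A i j * y (Sum.inl i) = u j)
    (hy2 : ∀ j ∈ Jᶜ, ∑ i ∈ I, A i j * y (Sum.inl i) = u j) :
    ∀ j, ∀ hj : j ∈ J, ∃ s : F, (s = 1 ∨ s = -1) ∧
      y (Sum.inr j) *
        (A.submatrix
          (fun a : Fin I.card => ((I.orderIsoOfFin rfl a : {r // r ∈ I}) : Fin m))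
          (fun b : Fin I.card =>
            ((Jᶜ.orderIsoOfFin
              (by rw [Finset.card_compl, Fintype.card_fin]; omega) b :
                {c // c ∈ Jᶜ}) : Fin n))).det
      = s * (Matrix.of (fun a b : Fin (I.card + 1) =>
          if h : (a : ℕ) < I.card then
            A ((I.orderIsoOfFin rfl ⟨(a : ℕ), h⟩ : {r // r ∈ I}) : Fin m)
              (((insert j Jᶜ).orderIsoOfFin
                  (by
                    rw [Finset.card_insert_of_notMem (by simpa using hj),
                      Finset.card_compl, Fintype.card_fin]
                    omega) b :
                    {c // c ∈ insert j Jᶜ}) : Fin n)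
          else
            u (((insert j Jᶜ).orderIsoOfFin
                  (by
                    rw [Finset.card_insert_of_notMem (by simpa using hj),
                      Finset.card_compl, Fintype.card_fin]
                    omega) b :
                    {c // c ∈ insert j Jᶜ}) : Fin n))).det := by
  intro j hj
  classical
  have hjc : j ∉ Jᶜ := by simpa using hj
  have h1 : Jᶜ.card = I.card := by rw [Finset.card_compl, Fintype.card_fin]; omega
  have h2 : (insert j Jᶜ).card = I.card + 1 := by
    rw [Finset.card_insert_of_notMem hjc, h1]
  let f : Fin I.card → Fin m := fun a => ((I.orderIsoOfFin rfl a : {r // r ∈ I}) : Fin m)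
  let eIso := (insert j Jᶜ).orderIsoOfFin h2
  let e : Fin (I.card + 1) → Fin n := fun b => (eIso b : Fin n)
  let g : Fin I.card → Fin n := fun b => ((Jᶜ.orderIsoOfFin h1 b : {c // c ∈ Jᶜ}) : Fin n)
  let p : Fin (I.card + 1) := eIso.symm ⟨j, Finset.mem_insert_self j Jᶜ⟩
  have hep : e p = j := by
    show ((eIso (eIso.symm ⟨j, Finset.mem_insert_self j Jᶜ⟩) : {c // c ∈ insert j Jᶜ}) : Fin n) = j
    rw [OrderIso.apply_symm_apply]
  have hmono_e : StrictMono e := by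
    have : e = fun b => (insert j Jᶜ).orderEmbOfFin h2 b := by
      funext b; exact Finset.coe_orderIsoOfFin_apply _ _ _
    rw [this]
    exact ((insert j Jᶜ).orderEmbOfFin h2).strictMono
  have hge : ∀ b, e (p.succAbove b) = g b := by
    have hmem : ∀ b : Fin I.card, e (p.succAbove b) ∈ Jᶜ := by
      intro b
      have h3 : e (p.succAbove b) ∈ insert j Jᶜ := (eIso (p.succAbove b)).2
      have h4 : e (p.succAbove b) ≠ j := by
        intro hc
        have : eIso (p.succAbove b) = eIso p := Subtype.ext (by
          show e (p.succAbove b) = e p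
          rw [hep]; exact hc)
        exact Fin.succAbove_ne p b (eIso.injective this)
      exact Finset.mem_of_mem_insert_of_ne h3 h4
    have hsm : StrictMono (fun b => e (p.succAbove b)) :=
      hmono_e.comp (Fin.strictMono_succAbove p)
    have huniq := Finset.orderEmbOfFin_unique h1 hmem hsm
    intro b
    rw [congrFun huniq b]
    exact (Finset.coe_orderIsoOfFin_apply _ _ _).symm
  let B : Matrix (Fin I.card) (Fin (I.card + 1)) F := Matrix.of fun a b => A (f a) (e b)
  let z : Fin I.card → F := fun a => y (Sum.inl (f a))
  let c : F := y (Sum.inr j)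
  have hrow : ∀ b, u (e b) = (if b = p then c else 0) + ∑ a, B a b * z a := by
    intro b
    have hsum : ∑ a, B a b * z a = ∑ i ∈ I, A i (e b) * y (Sum.inl i) := by
      rw [← Finset.sum_coe_sort I (fun i => A i (e b) * y (Sum.inl i))]
      exact ((I.orderIsoOfFin rfl).toEquiv.sum_comp
        (fun x : {r // r ∈ I} => A x (e b) * y (Sum.inl (x : Fin m))))
    rcases eq_or_ne b p with rfl | hb
    · rw [if_pos rfl, hsum, hep]
      exact (hy1 j hj).symm
    · have hbJ : e b ∈ Jᶜ := by
        refine Finset.mem_of_mem_insert_of_ne (eIso b).2 fun hc => hb ?_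
        exact eIso.injective (Subtype.ext (hc.trans hep.symm))
      rw [if_neg hb, zero_add, hsum]
      exact (hy2 _ hbJ).symm
  refine ⟨(-1 : F) ^ (I.card + (p : ℕ)), ?_, ?_⟩
  · rcases Nat.even_or_odd (I.card + (p : ℕ)) with h | h
    · exact Or.inl h.neg_one_pow
    · exact Or.inr h.neg_one_pow
  · show y (Sum.inr j) * (A.submatrix f g).det
      = (-1 : F) ^ (I.card + (p : ℕ)) * (NN B (fun b => u (e b))).det
    have hv : (fun b => u (e b)) = fun b => (if b = p then c else 0) + ∑ a, B a b * z a :=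
      funext hrow
    rw [hv, det_NN_main]
    have hD : A.submatrix f g = B.submatrix id p.succAbove := by
      ext a b
      show A (f a) (g b) = A (f a) (e (p.succAbove b))
      rw [hge]
    rw [hD, ← mul_assoc, ← mul_assoc, ← pow_add]
    have he : Even (I.card + (p : ℕ) + (I.card + (p : ℕ))) := ⟨_, rfl⟩
    rw [he.neg_one_pow, one_mul]
end

section
/- Let R be an integral domain, σ a finite type, and let P and Q be nonzero multivariate polynomials in the variables indexed by σ with coefficients in R. Define the Newton polytope of a nonzero polynomial as the convex hull in ℝ^σ of its support, i.e., of the set of its exponent vectors regarded as points of ℝ^σ. Then the Newton polytope of the product P·Q equals the Minkowski sum of the Newton polytope of P and the Newton polytope of Q. -/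
open scoped Pointwise

/-- The Newton polytope of a multivariate polynomial: the convex hull in `ℝ^σ`
of its support (the set of its exponent vectors, regarded as points of `ℝ^σ`). -/
noncomputable def newtonPolytope {R σ : Type*} [CommSemiring R]
    (P : MvPolynomial σ R) : Set (σ → ℝ) :=
  convexHull ℝ ((fun α : σ →₀ ℕ => fun s => (α s : ℝ)) '' (P.support : Set (σ →₀ ℕ)))

section Aux

variable {σ : Type*}

/-- The embedding of exponent vectors into `ℝ^σ`. -/
noncomputable def npEmb (α : σ →₀ ℕ) : σ → ℝ := fun s => (α s : ℝ)

lemma npEmb_add (α β : σ →₀ ℕ) : npEmb (α + β) = npEmb α + npEmb β := by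
  funext s; simp [npEmb]

lemma npEmb_injective : Function.Injective (npEmb (σ := σ)) := by
  intro α β h
  ext s
  have := congrFun h s
  simp only [npEmb] at this
  exact_mod_cast this

/-- Extreme points of the convex hull of a Minkowski sum decompose uniquely. -/
lemma extreme_point_decomp {E : Type*} [AddCommGroup E] [Module ℝ E] {A B : Set E} {v : E}
    (hv : v ∈ (convexHull ℝ (A + B)).extremePoints ℝ) :
    ∃ a ∈ A, ∃ b ∈ B, v = a + b ∧
      ∀ a' ∈ A, ∀ b' ∈ B, a' + b' = v → a' = a ∧ b' = b := by
  have hvAB : v ∈ A + B := extremePoints_convexHull_subset hv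
  obtain ⟨a, ha, b, hb, hab'⟩ := hvAB
  have hab : a + b = v := hab'
  refine ⟨a, ha, b, hb, hab.symm, ?_⟩
  intro a' ha' b' hb' h'
  have hm1 : a + b' ∈ convexHull ℝ (A + B) :=
    subset_convexHull ℝ _ ⟨a, ha, b', hb', rfl⟩
  have hm2 : a' + b ∈ convexHull ℝ (A + B) :=
    subset_convexHull ℝ _ ⟨a', ha', b, hb, rfl⟩
  have hsum2 : (a + b') + (a' + b) = v + v := by
    calc (a + b') + (a' + b) = (a + b) + (a' + b') := by abel
      _ = v + v := by rw [hab, h']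
  have hseg : v ∈ openSegment ℝ (a + b') (a' + b) := by
    refine ⟨1/2, 1/2, by norm_num, by norm_num, by norm_num, ?_⟩
    linear_combination (norm := module) (1/2 : ℝ) • hsum2
  obtain ⟨h1, h2⟩ := (mem_extremePoints.1 hv).2 _ hm1 _ hm2 hseg
  have hb'b : b' = b := by
    have : a + b' = a + b := by rw [h1, ← hab]
    exact add_left_cancel this
  have ha'a : a' = a := by
    have : a' + b = a + b := by rw [h2, ← hab]
    exact add_right_cancel this
  exact ⟨ha'a, hb'b⟩

end Aux

/-- over an integral domain, the Newton polytope of a product of two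
nonzero multivariate polynomials equals the Minkowski sum of their Newton polytopes. -/
theorem stmt6 {R σ : Type*} [CommRing R] [IsDomain R] [Finite σ]
    (P Q : MvPolynomial σ R) (hP : P ≠ 0) (hQ : Q ≠ 0) :
    newtonPolytope (P * Q) = newtonPolytope P + newtonPolytope Q := by
  classical
  set SP : Set (σ → ℝ) := npEmb '' (P.support : Set (σ →₀ ℕ)) with hSPdef
  set SQ : Set (σ → ℝ) := npEmb '' (Q.support : Set (σ →₀ ℕ)) with hSQdef
  have hNP : newtonPolytope P = convexHull ℝ SP := rfl
  have hNQ : newtonPolytope Q = convexHull ℝ SQ := rfl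
  have hNPQ : newtonPolytope (P * Q) =
      convexHull ℝ (npEmb '' ((P * Q).support : Set (σ →₀ ℕ))) := rfl
  have hsum : newtonPolytope P + newtonPolytope Q = convexHull ℝ (SP + SQ) := by
    rw [hNP, hNQ, convexHull_add]
  -- finiteness
  have hSPfin : SP.Finite := P.support.finite_toSet.image _
  have hSQfin : SQ.Finite := Q.support.finite_toSet.image _
  apply Set.Subset.antisymm
  · -- easy direction
    rw [hNPQ, hsum]
    apply convexHull_mono
    rintro x ⟨γ, hγ, rfl⟩
    have : γ ∈ P.support + Q.support := MvPolynomial.support_mul P Q hγ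
    obtain ⟨α, hα, β, hβ, h⟩ := Finset.mem_add.1 this
    exact ⟨npEmb α, ⟨α, hα, rfl⟩, npEmb β, ⟨β, hβ, rfl⟩, by rw [← h, npEmb_add]⟩
  · -- hard direction
    rw [hsum]
    have hcomp : IsCompact (convexHull ℝ (SP + SQ)) :=
      (hSPfin.add hSQfin).isCompact_convexHull ℝ
    have hclosed : IsClosed (newtonPolytope (P * Q)) := by
      rw [hNPQ]
      exact (((P * Q).support.finite_toSet.image _)).isClosed_convexHull ℝ
    have hext : (convexHull ℝ (SP + SQ)).extremePoints ℝ ⊆ newtonPolytope (P * Q) := by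
      intro v hv
      obtain ⟨a, ha, b, hb, hvab, huniq⟩ := extreme_point_decomp hv
      obtain ⟨α, hα, rfl⟩ := ha
      obtain ⟨β, hβ, rfl⟩ := hb
      have hα' : α ∈ P.support := hα
      have hβ' : β ∈ Q.support := hβ
      -- v is the image of α + β
      have hv' : v = npEmb (α + β) := by rw [npEmb_add, hvab]
      -- the coefficient of α + β in P * Q is nonzero
      have hcoeff : MvPolynomial.coeff (α + β) (P * Q) ≠ 0 := by
        rw [MvPolynomial.coeff_mul]
        have hmem : (α, β) ∈ Finset.HasAntidiagonal.antidiagonal (α + β) :=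
          Finset.HasAntidiagonal.mem_antidiagonal.2 rfl
        rw [Finset.sum_eq_single_of_mem (α, β) hmem]
        · exact mul_ne_zero (MvPolynomial.mem_support_iff.1 hα')
            (MvPolynomial.mem_support_iff.1 hβ')
        · rintro ⟨x, y⟩ hxy hne
          by_contra hne0
          have hx : x ∈ P.support := by
            apply MvPolynomial.mem_support_iff.2
            intro h0; apply hne0; rw [h0, zero_mul]
          have hy : y ∈ Q.support := by
            apply MvPolynomial.mem_support_iff.2
            intro h0; apply hne0; rw [h0, mul_zero]
          have hxyv : npEmb x + npEmb y = v := by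
            rw [← npEmb_add, Finset.HasAntidiagonal.mem_antidiagonal.1 hxy, ← hv']
          obtain ⟨h1, h2⟩ := huniq (npEmb x) ⟨x, hx, rfl⟩ (npEmb y) ⟨y, hy, rfl⟩ hxyv
          apply hne
          rw [npEmb_injective h1, npEmb_injective h2]
      rw [hNPQ, hv']
      exact subset_convexHull ℝ _ ⟨α + β, MvPolynomial.mem_support_iff.2 hcoeff, rfl⟩
    calc convexHull ℝ (SP + SQ)
        = closure (convexHull ℝ ((convexHull ℝ (SP + SQ)).extremePoints ℝ)) :=
          (closure_convexHull_extremePoints hcomp (convex_convexHull ℝ _)).symm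
      _ ⊆ closure (newtonPolytope (P * Q)) := by
          apply closure_mono
          apply convexHull_min hext
          rw [hNPQ]; exact convex_convexHull ℝ _
      _ = newtonPolytope (P * Q) := hclosed.closure_eq
end

section
/- Let A be an m×n matrix with real entries such that for every pair of subsets K ⊆ {1,…,m} and L ⊆ {1,…,n} with |K| = |L|, the maximum over all bijections σ : K → L of Σ_{k∈K} A_{kσ(k)} is attained at exactly one bijection. Let ε be a real number with ε < n·(min_{i,j} A_{ij} − max_{i,j} A_{ij}), and let B be the (m+1)×n real matrix whose first m rows are those of A and whose last row is (ε, 2ε, …, nε). Then for every pair of subsets K ⊆ {1,…,m+1} and L ⊆ {1,…,n} with |K| = |L|, the maximum over all bijections σ : K → L of Σ_{k∈K} B_{kσ(k)} is attained at exactly one bijection. -/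
/-- A real matrix is strongly non-degenerate (in the tropical sense) when, for every
pair of equal-cardinality subsets `K` of its row indices and `L` of its column indices,
the assignment maximum `max {∑_{k ∈ K} M_{k σ(k)} : σ a bijection from K to L}` is
attained by exactly one bijection. -/
def StronglyNonDegenerate {m n : ℕ} (M : Matrix (Fin m) (Fin n) ℝ) : Prop :=
  ∀ (K : Finset (Fin m)) (L : Finset (Fin n)), K.card = L.card →
    ∃ σ : {i // i ∈ K} ≃ {j // j ∈ L},
      ∀ τ : {i // i ∈ K} ≃ {j // j ∈ L}, τ ≠ σ →
        ∑ k : {i // i ∈ K}, M k.1 (τ k).1 < ∑ k : {i // i ∈ K}, M k.1 (σ k).1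

namespace Stmt10Aux

variable {m n : ℕ}

lemma castSucc_val {x : Fin (m+1)} (hx : (x : ℕ) < m) :
    (⟨(x : ℕ), hx⟩ : Fin m).castSucc = x := Fin.ext rfl

lemma lt_of_ne_last {x : Fin (m+1)} (hx : x ≠ Fin.last m) : (x : ℕ) < m := by
  rcases Nat.lt_or_ge (x : ℕ) m with h1 | h1
  · exact h1
  · exact absurd (Fin.ext (le_antisymm (Nat.le_of_lt_succ x.2) h1)) hx

def rowSet (K : Finset (Fin (m+1))) : Finset (Fin m) :=
  Finset.univ.filter (fun i => i.castSucc ∈ K)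

lemma mem_rowSet {K : Finset (Fin (m+1))} {i : Fin m} : i ∈ rowSet K ↔ i.castSucc ∈ K := by
  simp [rowSet]

lemma rowSet_card (K : Finset (Fin (m+1))) (h : Fin.last m ∉ K) :
    (rowSet K).card = K.card := by
  apply Finset.card_bij (fun i _ => i.castSucc)
  · intro a ha; exact mem_rowSet.1 ha
  · intro a _ b _ hab; exact Fin.castSucc_injective m hab
  · intro b hb
    have hbm : (b : ℕ) < m := lt_of_ne_last (fun hb' => h (hb' ▸ hb))
    exact ⟨⟨(b : ℕ), hbm⟩, mem_rowSet.2 ((castSucc_val hbm).symm ▸ hb), castSucc_val hbm⟩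

lemma rowSet_card_add_one (K : Finset (Fin (m+1))) (h : Fin.last m ∈ K) :
    (rowSet K).card + 1 = K.card := by
  have h1 : rowSet K = rowSet (K.erase (Fin.last m)) := by
    ext i
    simp only [mem_rowSet, Finset.mem_erase]
    exact ⟨fun hi => ⟨(Fin.castSucc_lt_last i).ne, hi⟩, fun hi => hi.2⟩
  rw [h1, rowSet_card _ (by simp), Finset.card_erase_add_one h]

def eqNoLast (K : Finset (Fin (m+1))) (h : Fin.last m ∉ K) :
    {i // i ∈ K} ≃ {i // i ∈ rowSet K} where
  toFun x :=
    have hx : ((x : Fin (m+1)) : ℕ) < m := lt_of_ne_last (fun hx' => h (hx' ▸ x.2))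
    ⟨⟨(x.1 : ℕ), hx⟩, mem_rowSet.2 ((castSucc_val hx).symm ▸ x.2)⟩
  invFun y := ⟨y.1.castSucc, mem_rowSet.1 y.2⟩
  left_inv x := Subtype.ext (Fin.ext rfl)
  right_inv y := Subtype.ext (Fin.ext rfl)

def eqWithLast (K : Finset (Fin (m+1))) (h : Fin.last m ∈ K) :
    {i // i ∈ K} ≃ Option {i // i ∈ rowSet K} where
  toFun x := if hx : ((x : Fin (m+1)) : ℕ) < m then
      some ⟨⟨(x.1 : ℕ), hx⟩, mem_rowSet.2 ((castSucc_val hx).symm ▸ x.2)⟩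
    else none
  invFun o := o.elim ⟨Fin.last m, h⟩ (fun y => ⟨y.1.castSucc, mem_rowSet.1 y.2⟩)
  left_inv x := by
    dsimp only
    by_cases hx : ((x : Fin (m+1)) : ℕ) < m
    · rw [dif_pos hx]; exact Subtype.ext (Fin.ext rfl)
    · rw [dif_neg hx]
      exact Subtype.ext (Fin.ext (le_antisymm (Nat.le_of_lt_succ x.1.2) (Nat.le_of_not_lt hx))).symm
  right_inv o := by
    cases o with
    | none => exact dif_neg (by simp)
    | some y =>
      dsimp only [Option.elim]
      rw [dif_pos (by simpa using y.1.2)]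
      exact congrArg some (Subtype.ext (Fin.ext rfl))

lemma eqWithLast_apply_last (K : Finset (Fin (m+1))) (h : Fin.last m ∈ K) :
    eqWithLast K h ⟨Fin.last m, h⟩ = none := by
  simp [eqWithLast]

lemma eqWithLast_symm_none (K : Finset (Fin (m+1))) (h : Fin.last m ∈ K) :
    (eqWithLast K h).symm none = ⟨Fin.last m, h⟩ := rfl

lemma eqWithLast_symm_some (K : Finset (Fin (m+1))) (h : Fin.last m ∈ K)
    (y : {i // i ∈ rowSet K}) :
    (eqWithLast K h).symm (some y) = ⟨y.1.castSucc, mem_rowSet.1 y.2⟩ := rfl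

def eqCol (L : Finset (Fin n)) (j₀ : Fin n) (h : j₀ ∈ L) :
    {j // j ∈ L} ≃ Option {j // j ∈ L.erase j₀} where
  toFun y := if hy : y.1 = j₀ then none else some ⟨y.1, Finset.mem_erase.2 ⟨hy, y.2⟩⟩
  invFun o := o.elim ⟨j₀, h⟩ (fun z => ⟨z.1, Finset.mem_of_mem_erase z.2⟩)
  left_inv y := by
    dsimp only
    by_cases hy : y.1 = j₀
    · rw [dif_pos hy]; exact Subtype.ext hy.symm
    · rw [dif_neg hy]; rfl
  right_inv o := by
    cases o with
    | none => exact dif_pos rfl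
    | some z =>
      dsimp only [Option.elim]
      rw [dif_neg (Finset.mem_erase.1 z.2).1]

lemma eqCol_symm_none (L : Finset (Fin n)) (j₀ : Fin n) (h : j₀ ∈ L) :
    (eqCol L j₀ h).symm none = ⟨j₀, h⟩ := rfl

lemma eqCol_apply_of_ne (L : Finset (Fin n)) (j₀ : Fin n) (h : j₀ ∈ L)
    {y : {j // j ∈ L}} (hy : y.1 ≠ j₀) :
    eqCol L j₀ h y = some ⟨y.1, Finset.mem_erase.2 ⟨hy, y.2⟩⟩ := dif_neg hy

lemma eqCol_apply_eq (L : Finset (Fin n)) (j₀ : Fin n) (h : j₀ ∈ L)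
    {y : {j // j ∈ L}} (hy : y.1 = j₀) :
    eqCol L j₀ h y = none := dif_pos hy

end Stmt10Aux

open Stmt10Aux in
/-- if `A` is strongly non-degenerate and
`ε < n·(min_{i,j} A_{ij} − max_{i,j} A_{ij})`, then the `(m+1) × n` matrix obtained
from `A` by appending the row `(ε, 2ε, …, nε)` is strongly non-degenerate. -/
theorem stmt10 {m n : ℕ} (A : Matrix (Fin m) (Fin n) ℝ) (ε : ℝ)
    (hA : StronglyNonDegenerate A)
    (hε : ε < n * ((⨅ p : Fin m × Fin n, A p.1 p.2) - ⨆ p : Fin m × Fin n, A p.1 p.2)) :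
    StronglyNonDegenerate (Matrix.of (fun (i : Fin (m + 1)) (j : Fin n) =>
      if h : (i : ℕ) < m then A ⟨(i : ℕ), h⟩ j else ((j : ℕ) + 1) * ε)) := by
  intro K L hcard
  set B : Matrix (Fin (m + 1)) (Fin n) ℝ := Matrix.of (fun (i : Fin (m + 1)) (j : Fin n) =>
      if h : (i : ℕ) < m then A ⟨(i : ℕ), h⟩ j else ((j : ℕ) + 1) * ε) with hB
  have hBlt : ∀ (i : Fin (m+1)) (hi : (i : ℕ) < m) (j : Fin n), B i j = A ⟨(i : ℕ), hi⟩ j :=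
    fun i hi j => dif_pos hi
  have hBcast : ∀ (y : Fin m) (j : Fin n), B y.castSucc j = A y j :=
    fun y j => dif_pos (by simpa using y.2)
  have hBlast : ∀ j : Fin n, B (Fin.last m) j = ((j : ℕ) + 1) * ε :=
    fun j => dif_neg (by simp)
  by_cases hlast : Fin.last m ∈ K
  · -- the new last row belongs to K
    have hKne : K.Nonempty := ⟨_, hlast⟩
    have hLne : L.Nonempty := Finset.card_pos.1 (hcard ▸ Finset.card_pos.2 hKne)
    set j₀ := L.min' hLne with hj₀def
    have hj₀ : j₀ ∈ L := L.min'_mem hLne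
    have hc : (rowSet K).card = (L.erase j₀).card := by
      have h1 := rowSet_card_add_one K hlast
      have h2 := Finset.card_erase_add_one hj₀
      omega
    obtain ⟨σ', hσ'⟩ := hA (rowSet K) (L.erase j₀) hc
    have lastK : {i // i ∈ K} := ⟨Fin.last m, hlast⟩
    have sumdec : ∀ (ρ : {i // i ∈ K} ≃ {j // j ∈ L}),
        ∑ k : {i // i ∈ K}, B k.1 (ρ k).1
          = (((ρ ⟨Fin.last m, hlast⟩).1 : ℕ) + 1) * ε
            + ∑ y : {i // i ∈ rowSet K}, A y.1 (ρ ((eqWithLast K hlast).symm (some y))).1 := by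
      intro ρ
      rw [Fintype.sum_equiv (eqWithLast K hlast) (fun k => B k.1 (ρ k).1)
        (fun o => B ((eqWithLast K hlast).symm o).1 (ρ ((eqWithLast K hlast).symm o)).1)
        (fun x => by simp only [Equiv.symm_apply_apply])]
      rw [Fintype.sum_option]
      congr 1
      · rw [eqWithLast_symm_none]
        exact hBlast _
      · exact Fintype.sum_congr _ _ (fun y => by
          rw [eqWithLast_symm_some]
          exact hBcast _ _)
    set σ : {i // i ∈ K} ≃ {j // j ∈ L} :=
      ((eqWithLast K hlast).trans σ'.optionCongr).trans (eqCol L j₀ hj₀).symm with hσdef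
    have hσlast : σ ⟨Fin.last m, hlast⟩ = ⟨j₀, hj₀⟩ := by
      show (eqCol L j₀ hj₀).symm (σ'.optionCongr (eqWithLast K hlast ⟨Fin.last m, hlast⟩)) = _
      rw [eqWithLast_apply_last]
      rfl
    have hσlastv : (σ ⟨Fin.last m, hlast⟩).1 = j₀ := by rw [hσlast]
    have hσsome : ∀ y : {i // i ∈ rowSet K},
        σ ((eqWithLast K hlast).symm (some y)) = ⟨(σ' y).1, Finset.mem_of_mem_erase (σ' y).2⟩ := by
      intro y
      show (eqCol L j₀ hj₀).symm
        (σ'.optionCongr (eqWithLast K hlast ((eqWithLast K hlast).symm (some y)))) = _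
      rw [Equiv.apply_symm_apply]
      rfl
    refine ⟨σ, ?_⟩
    intro τ hτ
    have hAσ : ∑ y : {i // i ∈ rowSet K}, A y.1 (σ ((eqWithLast K hlast).symm (some y))).1
        = ∑ y : {i // i ∈ rowSet K}, A y.1 (σ' y).1 :=
      Fintype.sum_congr _ _ (fun y => by rw [hσsome])
    rw [sumdec τ, sumdec σ, hAσ, hσlastv]
    by_cases hτ0 : (τ ⟨Fin.last m, hlast⟩).1 = j₀
    · -- the competing bijection also sends the last row to j₀
      set g : Option {i // i ∈ rowSet K} ≃ Option {j // j ∈ L.erase j₀} :=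
        (eqWithLast K hlast).symm.trans (τ.trans (eqCol L j₀ hj₀)) with hg
      have hgnone : g none = none := by
        show eqCol L j₀ hj₀ (τ ((eqWithLast K hlast).symm none)) = none
        rw [eqWithLast_symm_none]
        exact eqCol_apply_eq L j₀ hj₀ hτ0
      set τ'' := g.removeNone with hτ''def
      have hgsome : ∀ y, g (some y) = some (τ'' y) := by
        intro y
        cases hgy : g (some y) with
        | none =>
          exfalso
          have := g.injective (hgy.trans hgnone.symm)
          simp at this
        | some z =>
          rw [← hgy]
          exact (Equiv.removeNone_some g ⟨z, hgy⟩).symm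
      have hτval : ∀ y, (τ ((eqWithLast K hlast).symm (some y))).1 = (τ'' y).1 := by
        intro y
        have h2 : eqCol L j₀ hj₀ (τ ((eqWithLast K hlast).symm (some y))) = some (τ'' y) :=
          hgsome y
        by_cases hy : (τ ((eqWithLast K hlast).symm (some y))).1 = j₀
        · rw [eqCol_apply_eq L j₀ hj₀ hy] at h2; cases h2
        · rw [eqCol_apply_of_ne L j₀ hj₀ hy] at h2
          exact congrArg Subtype.val (Option.some.inj h2)
      have hτ''ne : τ'' ≠ σ' := by
        intro hcontra
        apply hτ
        apply Equiv.ext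
        intro x
        cases hEx : eqWithLast K hlast x with
        | none =>
          have hx : x = ⟨Fin.last m, hlast⟩ := by
            rw [← Equiv.symm_apply_apply (eqWithLast K hlast) x, hEx, eqWithLast_symm_none]
          rw [hx, hσlast]
          exact Subtype.ext hτ0
        | some y =>
          have hx : x = (eqWithLast K hlast).symm (some y) := by
            rw [← Equiv.symm_apply_apply (eqWithLast K hlast) x, hEx]
          rw [hx, hσsome y]
          apply Subtype.ext
          rw [hτval y, hcontra]
      have hlt := hσ' τ'' hτ''ne
      have hAτ : ∑ y : {i // i ∈ rowSet K}, A y.1 (τ ((eqWithLast K hlast).symm (some y))).1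
          = ∑ y : {i // i ∈ rowSet K}, A y.1 (τ'' y).1 :=
        Fintype.sum_congr _ _ (fun y => by rw [hτval])
      rw [hτ0, hAτ]
      linarith
    · -- the competing bijection sends the last row to a strictly larger column
      have hj0lt : (j₀ : ℕ) < ((τ ⟨Fin.last m, hlast⟩).1 : ℕ) := by
        have h1 : j₀ ≤ (τ ⟨Fin.last m, hlast⟩).1 := L.min'_le _ (τ ⟨Fin.last m, hlast⟩).2
        have h2 : j₀ < (τ ⟨Fin.last m, hlast⟩).1 := lt_of_le_of_ne h1 (fun h => hτ0 h.symm)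
        exact h2
      set S := ⨆ p : Fin m × Fin n, A p.1 p.2 with hS
      set I := ⨅ p : Fin m × Fin n, A p.1 p.2 with hI
      have hbddA : BddAbove (Set.range fun p : Fin m × Fin n => A p.1 p.2) :=
        (Set.finite_range _).bddAbove
      have hbddB : BddBelow (Set.range fun p : Fin m × Fin n => A p.1 p.2) :=
        (Set.finite_range _).bddBelow
      have hub : ∀ (i : Fin m) (j : Fin n), A i j ≤ S := fun i j => le_ciSup hbddA (i, j)
      have hlb : ∀ (i : Fin m) (j : Fin n), I ≤ A i j := fun i j => ciInf_le hbddB (i, j)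
      have hSI : 0 ≤ S - I := by
        rcases isEmpty_or_nonempty (Fin m × Fin n) with hE | hNE
        · rw [hS, hI, Real.iSup_of_isEmpty, Real.iInf_of_isEmpty]; norm_num
        · have h4 : I ≤ S := csInf_le_csSup (Set.range_nonempty _) hbddB hbddA
          linarith
      have hcardle : (((rowSet K).card : ℕ) : ℝ) ≤ (n : ℝ) := by
        have h1 : (rowSet K).card ≤ n := by
          rw [hc]
          calc (L.erase j₀).card ≤ L.card := Finset.card_le_card (Finset.erase_subset _ _)
            _ ≤ (Finset.univ : Finset (Fin n)).card := Finset.card_le_univ L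
            _ = n := by simp
        exact_mod_cast h1
      have hconst : ∀ c : ℝ, ∑ _y : {i // i ∈ rowSet K}, c = ((rowSet K).card : ℝ) * c := by
        intro c
        rw [Finset.sum_const, Finset.card_univ, Fintype.card_coe, nsmul_eq_mul]
      have hSumτ : ∑ y : {i // i ∈ rowSet K}, A y.1 (τ ((eqWithLast K hlast).symm (some y))).1
          ≤ ((rowSet K).card : ℝ) * S := by
        rw [← hconst S]
        exact Finset.sum_le_sum (fun y _ => hub _ _)
      have hSumσ : ((rowSet K).card : ℝ) * I ≤ ∑ y : {i // i ∈ rowSet K}, A y.1 (σ' y).1 := by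
        rw [← hconst I]
        exact Finset.sum_le_sum (fun y _ => hlb _ _)
      have hεneg : ε < 0 := by
        have h2 : (n : ℝ) * (I - S) ≤ 0 :=
          mul_nonpos_of_nonneg_of_nonpos (Nat.cast_nonneg n) (by linarith)
        linarith
      have hcs : ((rowSet K).card : ℝ) * (S - I) ≤ (n : ℝ) * (S - I) :=
        mul_le_mul_of_nonneg_right hcardle hSI
      have hjε : ((((τ ⟨Fin.last m, hlast⟩).1 : ℕ) : ℝ) + 1) * ε ≤ (((j₀ : ℕ) : ℝ) + 2) * ε := by
        apply mul_le_mul_of_nonpos_right _ hεneg.le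
        have h3 : (j₀ : ℕ) + 1 ≤ ((τ ⟨Fin.last m, hlast⟩).1 : ℕ) := hj0lt
        exact_mod_cast Nat.succ_le_of_lt (by omega)
      nlinarith [hε, hSumτ, hSumσ, hcs, hjε]
  · -- the new last row does not belong to K : reduce directly to A
    have hc : (rowSet K).card = L.card := (rowSet_card K hlast).trans hcard
    obtain ⟨σ', hσ'⟩ := hA (rowSet K) L hc
    set e := eqNoLast K hlast with he
    have key : ∀ (ρ : {i // i ∈ K} ≃ {j // j ∈ L}),
        ∑ k : {i // i ∈ K}, B k.1 (ρ k).1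
          = ∑ y : {i // i ∈ rowSet K}, A y.1 ((e.symm.trans ρ) y).1 := by
      intro ρ
      refine Fintype.sum_equiv e _ _ (fun x => ?_)
      show B x.1 (ρ x).1 = A (e x).1 (ρ (e.symm (e x))).1
      rw [Equiv.symm_apply_apply]
      exact hBlt x.1 (lt_of_ne_last (fun hx' => hlast (hx' ▸ x.2))) _
    refine ⟨e.trans σ', ?_⟩
    intro τ hτ
    have hτ' : e.symm.trans τ ≠ σ' := by
      intro hcontra
      apply hτ
      have h2 : τ = e.trans (e.symm.trans τ) := by
        apply Equiv.ext; intro x; simp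
      rw [h2, hcontra]
    have hident : e.symm.trans (e.trans σ') = σ' := by
      apply Equiv.ext; intro x; simp
    rw [key τ, key (e.trans σ'), hident]
    exact hσ' _ hτ'
end

section
/- Work in ℝ∪{−∞} with the usual order and with addition extended by (−∞) + t = t + (−∞) = −∞; the maximum over an empty index set is −∞. Let a, b ∈ (ℝ∪{−∞})^n with a_j ≠ b_j for every j ∈ {1,…,n}, and let x ∈ (ℝ∪{−∞})^n. Then max_{1≤j≤n} (a_j + x_j) ≥ max_{1≤j≤n} (b_j + x_j) holds if and only if max_{j : a_j > b_j} (a_j + x_j) ≥ max_{j : b_j > a_j} (b_j + x_j). -/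
/-- in `ℝ ∪ {−∞}` (with `−∞ + t = t + (−∞) = −∞`, and the maximum over
an empty index set equal to `−∞`), if `a_j ≠ b_j` for every `j`, then
`max_j (a_j + x_j) ≥ max_j (b_j + x_j)` iff
`max_{j : a_j > b_j} (a_j + x_j) ≥ max_{j : b_j > a_j} (b_j + x_j)`. -/
theorem stmt12 {n : ℕ} (a b x : Fin n → WithBot ℝ) (hab : ∀ j, a j ≠ b j) :
    Finset.univ.sup (fun j => a j + x j) ≥ Finset.univ.sup (fun j => b j + x j) ↔
    (Finset.univ.filter (fun j => b j < a j)).sup (fun j => a j + x j) ≥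
      (Finset.univ.filter (fun j => a j < b j)).sup (fun j => b j + x j) := by
  classical
  set S := Finset.univ.filter (fun j => b j < a j) with hS
  set T := Finset.univ.filter (fun j => a j < b j) with hT
  set M := T.sup (fun j => b j + x j) with hM
  have hjmem : ∀ j : Fin n, j ∈ S ∨ j ∈ T := by
    intro j
    rcases lt_or_gt_of_ne (hab j) with h | h
    · right; simp [hT, h]
    · left; simp [hS, h]
  have hST : ∀ j ∈ T, a j + x j ≤ b j + x j := by
    intro j hj
    have : a j < b j := by simpa [hT] using hj
    exact add_le_add_left this.le _
  have hSb : ∀ j ∈ S, b j + x j ≤ a j + x j := by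
    intro j hj
    have : b j < a j := by simpa [hS] using hj
    exact add_le_add_left this.le _
  have hMle : M ≤ Finset.univ.sup (fun j => b j + x j) :=
    Finset.sup_le fun j _ => Finset.le_sup (f := fun j => b j + x j) (Finset.mem_univ j)
  constructor
  · intro h
    by_contra hc
    push_neg at hc
    have hMbot : M ≠ ⊥ := ne_bot_of_gt hc
    have hle : Finset.univ.sup (fun j => a j + x j) ≤ M := by
      apply Finset.sup_le
      intro j _
      rcases hjmem j with hj | hj
      · exact le_of_lt (lt_of_le_of_lt (Finset.le_sup (f := fun j => a j + x j) hj) hc)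
      · exact (hST j hj).trans (Finset.le_sup (f := fun j => b j + x j) hj)
    have heq : Finset.univ.sup (fun j => a j + x j) = M :=
      le_antisymm hle (le_trans hMle h)
    have hne : (Finset.univ : Finset (Fin n)).Nonempty := by
      rcases Finset.eq_empty_or_nonempty (Finset.univ : Finset (Fin n)) with he | hne
      · exfalso; apply hMbot; rw [← heq, he, Finset.sup_empty]
      · exact hne
    obtain ⟨j, -, hj⟩ := Finset.exists_mem_eq_sup Finset.univ hne (fun j => a j + x j)
    have hjM : a j + x j = M := by rw [← hj, heq]
    rcases hjmem j with hjS | hjT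
    · have : a j + x j < M := lt_of_le_of_lt (Finset.le_sup (f := fun j => a j + x j) hjS) hc
      exact this.ne hjM
    · have hxj : x j ≠ ⊥ := by
        intro hx
        apply hMbot
        rw [← hjM, hx]; simp
      have hlt : a j < b j := by simpa [hT] using hjT
      have : a j + x j < b j + x j := WithBot.add_lt_add_right hxj hlt
      have hle2 : b j + x j ≤ M := Finset.le_sup (f := fun j => b j + x j) hjT
      exact absurd (hjM ▸ this) (not_lt.mpr hle2)
  · intro h
    apply Finset.sup_le
    intro j _
    have hSle : S.sup (fun j => a j + x j) ≤ Finset.univ.sup (fun j => a j + x j) :=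
      Finset.sup_le fun i _ => Finset.le_sup (f := fun j => a j + x j) (Finset.mem_univ i)
    rcases hjmem j with hj | hj
    · exact (hSb j hj).trans (Finset.le_sup (f := fun j => a j + x j) (Finset.mem_univ j))
    · exact (Finset.le_sup (f := fun j => b j + x j) hj : b j + x j ≤ M).trans (h.trans hSle)
end

section
/- Let W be an m×n matrix with real entries such that for every pair of subsets K ⊆ {1,…,m}, L ⊆ {1,…,n} with |K| = |L|, the maximum over all bijections σ : K → L of Σ_{k∈K} W_{kσ(k)} is attained at exactly one bijection. Fix subsets K₁, K₂ ⊆ {1,…,m} and L ⊆ {1,…,n} with |K₁| = |K₂| = |L|, and let σ₁* : K₁ → L and σ₂* : K₂ → L be the unique optimal bijections for K₁×L and K₂×L respectively. Consider the polynomial F ∈ ℤ[X_{ij} : 1 ≤ i ≤ m, 1 ≤ j ≤ n] equal to the product of the two minors of the generic matrix (X_{ij}): F = det(X_{K₁×L}) · det(X_{K₂×L}). Then, among the exponent vectors α ∈ ℕ^{m×n} in the support of F, the linear function α ↦ Σ_{i,j} W_{ij}·α_{ij} attains its maximum at exactly one exponent vector, namely the sum of the 0/1 indicator matrices of σ₁*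 and σ₂*. -/
/-- The minor `det (X_{K×L})` of the generic `m × n` matrix of variables `(X_{ij})`,
formed by the rows in `K` and the columns in `L`, as a polynomial in `ℤ[X_{ij}]`. -/
noncomputable def genericMinor {m n : ℕ} (K : Finset (Fin m)) (L : Finset (Fin n))
    (h : K.card = L.card) : MvPolynomial (Fin m × Fin n) ℤ :=
  (Matrix.of (fun s t : Fin L.card =>
    MvPolynomial.X (((K.orderIsoOfFin h s : {i // i ∈ K}) : Fin m),
      ((L.orderIsoOfFin rfl t : {j // j ∈ L}) : Fin n)))).det

/-- The indicator matrix (in `ℕ^{m×n}`) of a bijection `σ : K → L`: it is `1` at the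
entries `(k, σ k)` for `k ∈ K` and `0` elsewhere. -/
noncomputable def bijIndicator {m n : ℕ} {K : Finset (Fin m)} {L : Finset (Fin n)}
    (σ : {i // i ∈ K} ≃ {j // j ∈ L}) : (Fin m × Fin n) →₀ ℕ :=
  ∑ k : {i // i ∈ K}, Finsupp.single (k.1, (σ k).1) 1

open MvPolynomial Finset Equiv

variable {m n : ℕ} {K : Finset (Fin m)} {L : Finset (Fin n)}

lemma bijIndicator_apply (τ : {i // i ∈ K} ≃ {j // j ∈ L}) (p : Fin m × Fin n) :
    bijIndicator τ p = ∑ k : {i // i ∈ K}, (if (k.1, (τ k).1) = p then 1 else 0) := by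
  rw [bijIndicator, Finsupp.finset_sum_apply]
  refine Finset.sum_congr rfl fun k _ => ?_
  rw [Finsupp.single_apply]

lemma bijIndicator_apply_self (τ : {i // i ∈ K} ≃ {j // j ∈ L}) (k : {i // i ∈ K}) :
    bijIndicator τ (k.1, (τ k).1) = 1 := by
  rw [bijIndicator_apply]
  rw [Finset.sum_eq_single k (fun k' _ hk' => ?_) (by simp)]
  · simp
  · rw [if_neg]
    intro hc
    exact hk' (Subtype.ext (congrArg Prod.fst hc))

lemma bijIndicator_injective :
    Function.Injective (bijIndicator (K := K) (L := L)) := by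
  intro τ τ' hval
  ext k
  have h1 := bijIndicator_apply_self τ k
  rw [hval, bijIndicator_apply] at h1
  have h2 : ∃ k' ∈ (Finset.univ : Finset {i // i ∈ K}),
      (if ((k' : {i // i ∈ K}).1, (τ' k').1) = (k.1, (τ k).1) then 1 else 0) ≠ 0 := by
    by_contra hc
    push_neg at hc
    rw [Finset.sum_eq_zero (fun k' hk' => hc k' hk')] at h1
    exact one_ne_zero h1.symm
  obtain ⟨k', -, hk'⟩ := h2
  rw [ne_eq, ite_eq_right_iff, not_forall] at hk'
  obtain ⟨heq, -⟩ := hk'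
  have : k' = k := Subtype.ext (congrArg Prod.fst heq)
  subst this
  simpa using congrArg Fin.val (congrArg Prod.snd heq).symm

noncomputable def permBijEquiv (K : Finset (Fin m)) (L : Finset (Fin n)) (h : K.card = L.card) :
    Equiv.Perm (Fin L.card) ≃ ({i // i ∈ K} ≃ {j // j ∈ L}) where
  toFun σ := ((K.orderIsoOfFin h).toEquiv.symm.trans σ.symm).trans (L.orderIsoOfFin rfl).toEquiv
  invFun τ := ((K.orderIsoOfFin h).toEquiv.trans (τ.trans (L.orderIsoOfFin rfl).toEquiv.symm)).symm
  left_inv σ := by ext i; simp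
  right_inv τ := by ext k; simp

lemma permBijEquiv_apply_row (K : Finset (Fin m)) (L : Finset (Fin n)) (h : K.card = L.card)
    (σ : Equiv.Perm (Fin L.card)) (t : Fin L.card) :
    permBijEquiv K L h σ (K.orderIsoOfFin h (σ t)) = L.orderIsoOfFin rfl t := by
  simp [permBijEquiv]

lemma prod_X_eq_monomial {ι S : Type*} (s : Finset ι) (f : ι → S) :
    (∏ i ∈ s, (X (f i) : MvPolynomial S ℤ)) =
      monomial (∑ i ∈ s, Finsupp.single (f i) 1) 1 := by
  induction s using Finset.cons_induction with
  | empty => simp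
  | cons a s ha ih =>
      rw [Finset.prod_cons, ih, Finset.sum_cons, ← one_mul (1 : ℤ), ← monomial_mul]
      rw [X_pow_eq_monomial (e := 1) (n := f a) |>.symm, pow_one, one_mul]

lemma genericMinor_eq (K : Finset (Fin m)) (L : Finset (Fin n)) (h : K.card = L.card) :
    genericMinor K L h = ∑ τ : ({i // i ∈ K} ≃ {j // j ∈ L}),
      monomial (bijIndicator τ)
        ((Equiv.Perm.sign ((permBijEquiv K L h).symm τ) : ℤ)) := by
  rw [genericMinor, Matrix.det_apply, ← Equiv.sum_comp (permBijEquiv K L h)]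
  refine Finset.sum_congr rfl fun σ _ => ?_
  rw [Equiv.symm_apply_apply]
  have hprod : (∏ t : Fin L.card, (X ((((K.orderIsoOfFin h) (σ t) : {i // i ∈ K}) : Fin m),
        (((L.orderIsoOfFin rfl) t : {j // j ∈ L}) : Fin n)) : MvPolynomial (Fin m × Fin n) ℤ)) =
      monomial (∑ t : Fin L.card, Finsupp.single
        ((((K.orderIsoOfFin h) (σ t) : {i // i ∈ K}) : Fin m),
        (((L.orderIsoOfFin rfl) t : {j // j ∈ L}) : Fin n)) 1) 1 :=
    prod_X_eq_monomial _ _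
  have hind : (∑ t : Fin L.card, Finsupp.single
        ((((K.orderIsoOfFin h) (σ t) : {i // i ∈ K}) : Fin m),
        (((L.orderIsoOfFin rfl) t : {j // j ∈ L}) : Fin n)) 1)
      = bijIndicator (permBijEquiv K L h σ) := by
    rw [bijIndicator]
    refine Fintype.sum_equiv (σ.trans (K.orderIsoOfFin h).toEquiv) _ _ fun t => ?_
    have := permBijEquiv_apply_row K L h σ t
    simp only [Equiv.trans_apply, RelIso.coe_fn_toEquiv]
    rw [this]
  simp only [Matrix.of_apply] at *
  rw [hprod, hind, smul_monomial, Units.smul_def, smul_eq_mul, mul_one]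


lemma coeff_genericMinor_bijIndicator (K : Finset (Fin m)) (L : Finset (Fin n))
    (h : K.card = L.card) (τ : {i // i ∈ K} ≃ {j // j ∈ L}) :
    coeff (bijIndicator τ) (genericMinor K L h)
      = ((Equiv.Perm.sign ((permBijEquiv K L h).symm τ) : ℤ)) := by
  rw [genericMinor_eq, coeff_sum]
  rw [Finset.sum_eq_single τ (fun τ' _ hne => ?_) (by simp)]
  · rw [coeff_monomial, if_pos rfl]
  · rw [coeff_monomial, if_neg (fun hc => hne (bijIndicator_injective hc))]

lemma coeff_genericMinor_bijIndicator_ne_zero (K : Finset (Fin m)) (L : Finset (Fin n))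
    (h : K.card = L.card) (τ : {i // i ∈ K} ≃ {j // j ∈ L}) :
    coeff (bijIndicator τ) (genericMinor K L h) ≠ 0 := by
  rw [coeff_genericMinor_bijIndicator]
  exact_mod_cast Units.ne_zero _

lemma exists_of_mem_support_genericMinor {K : Finset (Fin m)} {L : Finset (Fin n)}
    {h : K.card = L.card} {β : (Fin m × Fin n) →₀ ℕ}
    (hβ : β ∈ (genericMinor K L h).support) :
    ∃ τ : {i // i ∈ K} ≃ {j // j ∈ L}, β = bijIndicator τ := by
  by_contra hc
  push_neg at hc
  rw [mem_support_iff, genericMinor_eq, coeff_sum] at hβ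
  exact hβ (Finset.sum_eq_zero fun τ _ => by
    rw [coeff_monomial, if_neg (fun h' => hc τ h'.symm)])

lemma weight_bijIndicator (W : Matrix (Fin m) (Fin n) ℝ) (τ : {i // i ∈ K} ≃ {j // j ∈ L}) :
    (∑ p : Fin m × Fin n, W p.1 p.2 * ((bijIndicator τ) p : ℝ))
      = ∑ k : {i // i ∈ K}, W k.1 (τ k).1 := by
  simp only [bijIndicator_apply]
  push_cast
  simp only [Finset.mul_sum]
  rw [Finset.sum_comm]
  refine Finset.sum_congr rfl fun k _ => ?_
  simp [mul_ite]

set_option maxHeartbeats 1000000 in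
/-- let `W` be strongly non-degenerate, `K₁, K₂, L` equal-cardinality
subsets, `σ₁*, σ₂*` the unique optimal bijections for `K₁ × L` and `K₂ × L`, and
`F = det (X_{K₁×L}) · det (X_{K₂×L})`. Then, over the support of `F`, the linear
function `α ↦ ∑_{i,j} W_{ij} α_{ij}` attains its maximum at exactly one exponent
vector, namely the sum of the indicator matrices of `σ₁*` and `σ₂*`. -/
theorem stmt13 {m n : ℕ} (W : Matrix (Fin m) (Fin n) ℝ)
    (hW : StronglyNonDegenerate W)
    (K₁ K₂ : Finset (Fin m)) (L : Finset (Fin n))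
    (h₁ : K₁.card = L.card) (h₂ : K₂.card = L.card)
    (σ₁ : {i // i ∈ K₁} ≃ {j // j ∈ L}) (σ₂ : {i // i ∈ K₂} ≃ {j // j ∈ L})
    (hσ₁ : ∀ τ : {i // i ∈ K₁} ≃ {j // j ∈ L}, τ ≠ σ₁ →
      ∑ k : {i // i ∈ K₁}, W k.1 (τ k).1 < ∑ k : {i // i ∈ K₁}, W k.1 (σ₁ k).1)
    (hσ₂ : ∀ τ : {i // i ∈ K₂} ≃ {j // j ∈ L}, τ ≠ σ₂ →
      ∑ k : {i // i ∈ K₂}, W k.1 (τ k).1 < ∑ k : {i // i ∈ K₂}, W k.1 (σ₂ k).1) :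
    bijIndicator σ₁ + bijIndicator σ₂
        ∈ (genericMinor K₁ L h₁ * genericMinor K₂ L h₂).support ∧
    ∀ α ∈ (genericMinor K₁ L h₁ * genericMinor K₂ L h₂).support,
      α ≠ bijIndicator σ₁ + bijIndicator σ₂ →
        (∑ p : Fin m × Fin n, W p.1 p.2 * (α p : ℝ)) <
          ∑ p : Fin m × Fin n,
            W p.1 p.2 * ((bijIndicator σ₁ + bijIndicator σ₂) p : ℝ) := by
  classical
  set F₁ := genericMinor K₁ L h₁ with hF₁
  set F₂ := genericMinor K₂ L h₂ with hF₂
  set w : ((Fin m × Fin n) →₀ ℕ) → ℝ :=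
    fun α => ∑ p : Fin m × Fin n, W p.1 p.2 * (α p : ℝ) with hw
  have hwadd : ∀ α β : (Fin m × Fin n) →₀ ℕ, w (α + β) = w α + w β := by
    intro α β
    simp only [hw, Finsupp.add_apply, Nat.cast_add, mul_add, Finset.sum_add_distrib]
  have hw1 : ∀ τ : {i // i ∈ K₁} ≃ {j // j ∈ L},
      w (bijIndicator τ) = ∑ k : {i // i ∈ K₁}, W k.1 (τ k).1 := fun τ => by
    simp only [hw]; exact weight_bijIndicator W τ
  have hw2 : ∀ τ : {i // i ∈ K₂} ≃ {j // j ∈ L},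
      w (bijIndicator τ) = ∑ k : {i // i ∈ K₂}, W k.1 (τ k).1 := fun τ => by
    simp only [hw]; exact weight_bijIndicator W τ
  have hstrict : ∀ (τ₁ : {i // i ∈ K₁} ≃ {j // j ∈ L}) (τ₂ : {i // i ∈ K₂} ≃ {j // j ∈ L}),
      (τ₁ ≠ σ₁ ∨ τ₂ ≠ σ₂) →
      w (bijIndicator τ₁) + w (bijIndicator τ₂)
        < w (bijIndicator σ₁) + w (bijIndicator σ₂) := by
    intro τ₁ τ₂ hne
    rw [hw1, hw1, hw2, hw2]
    rcases hne with h | h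
    · refine add_lt_add_of_lt_of_le (hσ₁ τ₁ h) ?_
      rcases eq_or_ne τ₂ σ₂ with rfl | h2
      · exact le_refl _
      · exact (hσ₂ τ₂ h2).le
    · refine add_lt_add_of_le_of_lt ?_ (hσ₂ τ₂ h)
      rcases eq_or_ne τ₁ σ₁ with rfl | h1
      · exact le_refl _
      · exact (hσ₁ τ₁ h1).le
  have key : ∀ β₁ ∈ F₁.support, ∀ β₂ ∈ F₂.support,
      β₁ + β₂ = bijIndicator σ₁ + bijIndicator σ₂ →
      β₁ = bijIndicator σ₁ ∧ β₂ = bijIndicator σ₂ := by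
    intro β₁ hβ₁ β₂ hβ₂ hsum
    obtain ⟨τ₁, rfl⟩ := exists_of_mem_support_genericMinor hβ₁
    obtain ⟨τ₂, rfl⟩ := exists_of_mem_support_genericMinor hβ₂
    by_contra hc
    have hne : τ₁ ≠ σ₁ ∨ τ₂ ≠ σ₂ := by
      by_contra h
      push_neg at h
      exact hc ⟨by rw [h.1], by rw [h.2]⟩
    have hlt := hstrict τ₁ τ₂ hne
    have heq : w (bijIndicator τ₁) + w (bijIndicator τ₂)
        = w (bijIndicator σ₁) + w (bijIndicator σ₂) := by
      rw [← hwadd, ← hwadd, hsum]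
    linarith
  have huniq : ∀ q ∈ Finset.HasAntidiagonal.antidiagonal (bijIndicator σ₁ + bijIndicator σ₂),
      q ≠ (bijIndicator σ₁, bijIndicator σ₂) →
      MvPolynomial.coeff q.1 F₁ * MvPolynomial.coeff q.2 F₂ = 0 := by
    intro q hq hne
    by_contra hne0
    have h1 : q.1 ∈ F₁.support := mem_support_iff.mpr (left_ne_zero_of_mul hne0)
    have h2 : q.2 ∈ F₂.support := mem_support_iff.mpr (right_ne_zero_of_mul hne0)
    obtain ⟨e1, e2⟩ := key q.1 h1 q.2 h2 (Finset.HasAntidiagonal.mem_antidiagonal.mp hq)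
    exact hne (Prod.ext e1 e2)
  have hmem : bijIndicator σ₁ + bijIndicator σ₂ ∈ (F₁ * F₂).support := by
    rw [mem_support_iff, coeff_mul,
      Finset.sum_eq_single_of_mem (bijIndicator σ₁, bijIndicator σ₂)
        (Finset.HasAntidiagonal.mem_antidiagonal.mpr rfl) huniq]
    exact mul_ne_zero (coeff_genericMinor_bijIndicator_ne_zero K₁ L h₁ σ₁)
      (coeff_genericMinor_bijIndicator_ne_zero K₂ L h₂ σ₂)
  refine ⟨hmem, fun α hα hne => ?_⟩
  have hsub := MvPolynomial.support_mul F₁ F₂ hα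
  rw [Finset.mem_add] at hsub
  obtain ⟨β₁, hβ₁, β₂, hβ₂, rfl⟩ := hsub
  obtain ⟨τ₁, rfl⟩ := exists_of_mem_support_genericMinor hβ₁
  obtain ⟨τ₂, rfl⟩ := exists_of_mem_support_genericMinor hβ₂
  have hne' : τ₁ ≠ σ₁ ∨ τ₂ ≠ σ₂ := by
    by_contra h
    push_neg at h
    exact hne (by rw [h.1, h.2])
  have hlt := hstrict τ₁ τ₂ hne'
  have e1 : (∑ p : Fin m × Fin n,
      W p.1 p.2 * (((bijIndicator τ₁ + bijIndicator τ₂) : (Fin m × Fin n) →₀ ℕ) p : ℝ))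
      = w (bijIndicator τ₁) + w (bijIndicator τ₂) := (hwadd _ _)
  have e2 : (∑ p : Fin m × Fin n,
      W p.1 p.2 * (((bijIndicator σ₁ + bijIndicator σ₂) : (Fin m × Fin n) →₀ ℕ) p : ℝ))
      = w (bijIndicator σ₁) + w (bijIndicator σ₂) := (hwadd _ _)
  rw [e1, e2]
  exact hlt
end
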